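/- Let G ∈ ℝ^{n×n} be a symmetric positive definite matrix and let I be the n×n identity. For d > 0 define F̄(d) = chol(d⁻¹G + I). Then for any 0 < d₁ < d₂ and every i = 1, …, n, λ_i(F̄(d₁)) > λ_i(F̄(d₂)); that is, each successive minimum λ_i(F̄(d)) is strictly decreasing in d. -/

import Mathlib

open Matrix

noncomputable section

/-- Euclidean norm of a real vector. -/
def euclNorm {m : ℕ} (x : Fin m → ℝ) : ℝ := Real.sqrt (∑ k, x k ^ 2)

/-- The lattice vector `A z` for an integer vector `z`. -/
def latticeVec {m n : ℕ} (A : Matrix (Fin m) (Fin n) ℝ) (z : Fin n → ℤ) : Fin m → ℝ :=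
  A.mulVec fun k => (z k : ℝ)

/-- The `i`-th successive minimum of the lattice generated by `A`: the smallest `r ≥ 0` such
that the closed ball of radius `r` centered at the origin contains `i` linearly independent
lattice vectors. -/
def succMin {m n : ℕ} (A : Matrix (Fin m) (Fin n) ℝ) (i : ℕ) : ℝ :=
  sInf {r : ℝ | 0 ≤ r ∧ ∃ v : Fin i → (Fin n → ℤ),
    LinearIndependent ℝ (fun j => latticeVec A (v j)) ∧
    ∀ j, euclNorm (latticeVec A (v j)) ≤ r}

/-- `R` is the Cholesky factor of `G`: `R` is upper triangular with positive diagonal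
entries and `Rᵀ * R = G`. -/
def IsCholesky {n : ℕ} (G R : Matrix (Fin n) (Fin n) ℝ) : Prop :=
  R.BlockTriangular id ∧ (∀ j, 0 < R j j) ∧ Rᵀ * R = G

/-- quadratic form lower bound for a positive definite matrix -/
lemma posdef_lower_bound {n : ℕ} {G : Matrix (Fin n) (Fin n) ℝ} (hG : G.PosDef) :
    ∃ μ : ℝ, 0 < μ ∧ ∀ x : Fin n → ℝ, μ * (x ⬝ᵥ x) ≤ x ⬝ᵥ G *ᵥ x := by
  rcases Nat.eq_zero_or_pos n with hn | hn
  · subst hn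
    exact ⟨1, one_pos, fun x => by simp [dotProduct]⟩
  haveI : Nonempty (Fin n) := ⟨⟨0, hn⟩⟩
  have hf : Continuous fun x : Fin n → ℝ => x ⬝ᵥ G *ᵥ x := by
    unfold dotProduct Matrix.mulVec dotProduct
    fun_prop
  have hsph : IsCompact (Metric.sphere (0 : Fin n → ℝ) 1) := isCompact_sphere 0 1
  have hne : (Metric.sphere (0 : Fin n → ℝ) 1).Nonempty :=
    NormedSpace.sphere_nonempty.mpr zero_le_one
  obtain ⟨x₀, hx₀mem, hx₀min'⟩ := hsph.exists_isMinOn hne hf.continuousOn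
  have hx₀min : ∀ y ∈ Metric.sphere (0 : Fin n → ℝ) 1, (fun x => x ⬝ᵥ G *ᵥ x) x₀ ≤ (fun x => x ⬝ᵥ G *ᵥ x) y := fun y hy => hx₀min' hy
  have hx₀norm : ‖x₀‖ = 1 := mem_sphere_zero_iff_norm.mp hx₀mem
  have hx₀ne : x₀ ≠ 0 := by intro h; rw [h] at hx₀norm; simp at hx₀norm
  set μ := x₀ ⬝ᵥ G *ᵥ x₀ with hμdef
  have hμpos : 0 < μ := by
    have := hG.dotProduct_mulVec_pos hx₀ne
    simpa using this
  refine ⟨μ / n, by positivity, fun x => ?_⟩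
  rcases eq_or_ne x 0 with rfl | hx
  · simp
  have hnx : (0:ℝ) < ‖x‖ := norm_pos_iff.mpr hx
  set y : Fin n → ℝ := ‖x‖⁻¹ • x with hy
  have hymem : y ∈ Metric.sphere (0 : Fin n → ℝ) 1 := by
    rw [mem_sphere_zero_iff_norm, hy, norm_smul]
    simp [abs_of_pos (inv_pos.mpr hnx), inv_mul_cancel₀ hnx.ne']
  have hsc : y ⬝ᵥ G *ᵥ y = ‖x‖⁻¹ * (‖x‖⁻¹ * (x ⬝ᵥ G *ᵥ x)) := by
    rw [hy, smul_dotProduct, mulVec_smul, dotProduct_smul]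
    simp [smul_eq_mul]
  have h1 : μ ≤ ‖x‖⁻¹ * (‖x‖⁻¹ * (x ⬝ᵥ G *ᵥ x)) := hsc ▸ hx₀min y hymem
  have h2 : μ * ‖x‖ ^ 2 ≤ x ⬝ᵥ G *ᵥ x := by
    have := mul_le_mul_of_nonneg_left h1 (le_of_lt (by positivity : (0:ℝ) < ‖x‖ ^ 2))
    calc μ * ‖x‖ ^ 2 = ‖x‖ ^ 2 * μ := by ring
    _ ≤ ‖x‖ ^ 2 * (‖x‖⁻¹ * (‖x‖⁻¹ * (x ⬝ᵥ G *ᵥ x))) := this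
    _ = x ⬝ᵥ G *ᵥ x := by field_simp
  have h3 : x ⬝ᵥ x ≤ n * ‖x‖ ^ 2 := by
    have : ∀ k, x k ^ 2 ≤ ‖x‖ ^ 2 := fun k => by
      have h := norm_le_pi_norm x k
      calc x k ^ 2 = ‖x k‖ ^ 2 := by rw [Real.norm_eq_abs, sq_abs]
      _ ≤ ‖x‖ ^ 2 := pow_le_pow_left₀ (norm_nonneg _) h 2
    calc x ⬝ᵥ x = ∑ k, x k ^ 2 := by simp [dotProduct, pow_two]
    _ ≤ ∑ _k : Fin n, ‖x‖ ^ 2 := Finset.sum_le_sum fun k _ => this k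
    _ = n * ‖x‖ ^ 2 := by simp [Finset.sum_const, nsmul_eq_mul]
  have hn' : (0:ℝ) < n := by exact_mod_cast hn
  calc μ / n * (x ⬝ᵥ x) ≤ μ / n * (n * ‖x‖ ^ 2) :=
        mul_le_mul_of_nonneg_left h3 (by positivity)
  _ = μ * ‖x‖ ^ 2 := by
        field_simp
  _ ≤ x ⬝ᵥ G *ᵥ x := h2

lemma mulVec_norm_sq {n : ℕ} (F : Matrix (Fin n) (Fin n) ℝ) (x : Fin n → ℝ) :
    (∑ k, (F *ᵥ x) k ^ 2) = x ⬝ᵥ (Fᵀ * F) *ᵥ x := by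
  have : (∑ k, (F *ᵥ x) k ^ 2) = (F *ᵥ x) ⬝ᵥ (F *ᵥ x) := by
    simp [dotProduct, pow_two]
  rw [this]
  conv_rhs => rw [← mulVec_mulVec, dotProduct_mulVec, vecMul_transpose]

theorem statement12 {n : ℕ} (G : Matrix (Fin n) (Fin n) ℝ) (hG : G.PosDef)
    (d1 d2 : ℝ) (hd1 : 0 < d1) (hd12 : d1 < d2)
    (F1 F2 : Matrix (Fin n) (Fin n) ℝ)
    (hF1 : IsCholesky (d1⁻¹ • G + 1) F1) (hF2 : IsCholesky (d2⁻¹ • G + 1) F2) :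
    ∀ i : ℕ, 1 ≤ i → i ≤ n → succMin F2 i < succMin F1 i := by
  intro i hi hin
  obtain ⟨μ, hμ, hμle⟩ := posdef_lower_bound hG
  set a := d2⁻¹ with ha
  set b := d1⁻¹ with hb
  have hd2 : (0:ℝ) < d2 := hd1.trans hd12
  have hapos : 0 < a := inv_pos.mpr hd2
  have hab : a < b := by
    rw [ha, hb]; exact (inv_lt_inv₀ (hd1.trans hd12) hd1).mpr hd12
  -- norm formulas
  have hq0 : ∀ x : Fin n → ℝ, 0 ≤ x ⬝ᵥ x := fun x => by
    simp only [dotProduct]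
    exact Finset.sum_nonneg fun k _ => mul_self_nonneg _
  have hnorm : ∀ (F : Matrix (Fin n) (Fin n) ℝ) (c : ℝ),
      Fᵀ * F = c • G + 1 → ∀ x : Fin n → ℝ,
      (∑ k, (F *ᵥ x) k ^ 2) = c * (x ⬝ᵥ G *ᵥ x) + x ⬝ᵥ x := by
    intro F c hFc x
    rw [mulVec_norm_sq, hFc]
    rw [add_mulVec, smul_mulVec, dotProduct_add, dotProduct_smul, one_mulVec]
    simp [smul_eq_mul]
  have hn1 := hnorm F1 b hF1.2.2
  have hn2 := hnorm F2 a hF2.2.2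
  -- the contraction constant
  set c : ℝ := Real.sqrt ((a * μ + 1) / (b * μ + 1)) with hc
  have hbm : (0:ℝ) < b * μ + 1 := by positivity
  have ham : (0:ℝ) < a * μ + 1 := by positivity
  have hclt : c < 1 := by
    rw [hc]
    have : (a * μ + 1) / (b * μ + 1) < 1 := by
      rw [div_lt_one hbm]
      nlinarith
    calc Real.sqrt ((a * μ + 1) / (b * μ + 1)) < Real.sqrt 1 := by
          apply Real.sqrt_lt_sqrt (by positivity) this
    _ = 1 := Real.sqrt_one
  have hcpos : 0 < c := Real.sqrt_pos.mpr (by positivity)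
  -- per-vector norm comparison
  have hkey : ∀ z : Fin n → ℤ, euclNorm (latticeVec F2 z) ≤ c * euclNorm (latticeVec F1 z) := by
    intro z
    set x : Fin n → ℝ := fun k => (z k : ℝ) with hx
    set q := x ⬝ᵥ G *ᵥ x with hqd
    set s := x ⬝ᵥ x with hsd
    have hqs : μ * s ≤ q := hμle x
    have hs : 0 ≤ s := hq0 x
    have hq : 0 ≤ q := le_trans (by positivity) hqs
    have e1 : euclNorm (latticeVec F1 z) = Real.sqrt (b * q + s) := by
      rw [euclNorm, latticeVec, hn1 x]
    have e2 : euclNorm (latticeVec F2 z) = Real.sqrt (a * q + s) := by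
      rw [euclNorm, latticeVec, hn2 x]
    rw [e1, e2, hc, ← Real.sqrt_mul (by positivity)]
    apply Real.sqrt_le_sqrt
    rw [div_mul_eq_mul_div, le_div_iff₀ hbm]
    nlinarith [mul_nonneg (sub_nonneg.mpr hab.le) (sub_nonneg.mpr hqs)]
  -- invertibility and linear independence transfer
  have hdet : ∀ (F : Matrix (Fin n) (Fin n) ℝ), F.BlockTriangular id → (∀ j, 0 < F j j) →
      Function.Injective F.mulVec := by
    intro F htri hpos
    apply mulVec_injective_iff_isUnit.mpr
    apply (Matrix.isUnit_iff_isUnit_det F).mpr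
    rw [det_of_upperTriangular htri]
    exact (Finset.prod_pos fun j _ => hpos j).ne'.isUnit
  have hLI : ∀ (F : Matrix (Fin n) (Fin n) ℝ), Function.Injective F.mulVec →
      ∀ (v : Fin i → (Fin n → ℤ)),
      (LinearIndependent ℝ (fun j => latticeVec F (v j)) ↔
       LinearIndependent ℝ (fun j => fun k => ((v j k : ℝ)))) := by
    intro F hinj v
    have := (Matrix.mulVecLin F).linearIndependent_iff
      (LinearMap.ker_eq_bot.mpr (by exact hinj))
      (v := fun j => fun k => ((v j k : ℝ)))
    simpa [Function.comp_def, Matrix.coe_mulVecLin, latticeVec] using this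
  have hinj1 := hdet F1 hF1.1 hF1.2.1
  have hinj2 := hdet F2 hF2.1 hF2.2.1
  -- sets
  set S1 := {r : ℝ | 0 ≤ r ∧ ∃ v : Fin i → (Fin n → ℤ),
    LinearIndependent ℝ (fun j => latticeVec F1 (v j)) ∧
    ∀ j, euclNorm (latticeVec F1 (v j)) ≤ r} with hS1
  set S2 := {r : ℝ | 0 ≤ r ∧ ∃ v : Fin i → (Fin n → ℤ),
    LinearIndependent ℝ (fun j => latticeVec F2 (v j)) ∧
    ∀ j, euclNorm (latticeVec F2 (v j)) ≤ r} with hS2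
  have hbdd2 : BddBelow S2 := ⟨0, fun r hr => hr.1⟩
  -- S1 nonempty
  have hS1ne : S1.Nonempty := by
    set v : Fin i → (Fin n → ℤ) := fun j => Pi.single (Fin.castLE hin j) 1 with hv
    have hvr : ∀ j, (fun k => ((v j k : ℝ))) = Pi.single (Fin.castLE hin j) (1:ℝ) := by
      intro j
      funext k
      rw [hv]
      simp [Pi.single_apply, apply_ite]
    have hlivr : LinearIndependent ℝ (fun j : Fin i => fun k => ((v j k : ℝ))) := by
      have hbase : LinearIndependent ℝ (fun j : Fin n => Pi.single j (1:ℝ)) := by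
        have := (Pi.basisFun ℝ (Fin n)).linearIndependent
        convert this using 1
        funext j
        simp [Pi.basisFun_apply]
      have := hbase.comp (Fin.castLE hin) (Fin.castLE_injective hin)
      convert this using 1
      funext j
      rw [hvr j]
      rfl
    have hli : LinearIndependent ℝ (fun j => latticeVec F1 (v j)) :=
      (hLI F1 hinj1 v).mpr hlivr
    have hine : (Finset.univ : Finset (Fin i)).Nonempty :=
      Finset.univ_nonempty_iff.mpr ⟨⟨0, hi⟩⟩
    refine ⟨max 0 (Finset.univ.sup' hine (fun j => euclNorm (latticeVec F1 (v j)))),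
      le_max_left _ _, v, hli, fun j => ?_⟩
    exact le_max_of_le_right
      (Finset.le_sup' (fun j => euclNorm (latticeVec F1 (v j))) (Finset.mem_univ j))
  -- every element of S1 is ≥ 1
  have hge1 : ∀ F : Matrix (Fin n) (Fin n) ℝ, (Fᵀ * F = b • G + 1 ∨ Fᵀ * F = a • G + 1) →
      ∀ r : ℝ, (0 ≤ r ∧ ∃ v : Fin i → (Fin n → ℤ),
        LinearIndependent ℝ (fun j => latticeVec F (v j)) ∧
        ∀ j, euclNorm (latticeVec F (v j)) ≤ r) → 1 ≤ r := by
    intro F hForm r ⟨hr0, v, hli, hbound⟩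
    set j0 : Fin i := ⟨0, hi⟩ with hj0
    have hne : latticeVec F (v j0) ≠ 0 := hli.ne_zero j0
    have hvne : (fun k => ((v j0 k : ℝ))) ≠ 0 := by
      intro h
      apply hne
      rw [latticeVec, h]
      exact mulVec_zero F
    obtain ⟨k0, hk0⟩ : ∃ k, v j0 k ≠ 0 := by
      by_contra h
      push_neg at h
      apply hvne
      funext k
      simp [h k]
    have hs1 : (1:ℝ) ≤ (fun k => ((v j0 k : ℝ))) ⬝ᵥ (fun k => ((v j0 k : ℝ))) := by
      have h1 : (1:ℝ) ≤ ((v j0 k0 : ℝ)) * ((v j0 k0 : ℝ)) := by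
        have : (1:ℤ) ≤ (v j0 k0) * (v j0 k0) := by
          rcases lt_or_gt_of_ne hk0 with h | h <;> nlinarith
        exact_mod_cast this
      calc (1:ℝ) ≤ ((v j0 k0 : ℝ)) * ((v j0 k0 : ℝ)) := h1
      _ ≤ ∑ k, ((v j0 k : ℝ)) * ((v j0 k : ℝ)) :=
          Finset.single_le_sum (f := fun k => ((v j0 k : ℝ)) * ((v j0 k : ℝ)))
            (fun k _ => mul_self_nonneg _) (Finset.mem_univ k0)
      _ = _ := rfl
    have hq := hμle (fun k => ((v j0 k : ℝ)))
    have hnormval : 1 ≤ euclNorm (latticeVec F (v j0)) := by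
      rw [euclNorm, latticeVec]
      rcases hForm with hF | hF
      · rw [hnorm F b hF]
        rw [show (1:ℝ) = Real.sqrt 1 from (Real.sqrt_one).symm]
        apply Real.sqrt_le_sqrt
        nlinarith [hq0 (fun k => ((v j0 k : ℝ)))]
      · rw [hnorm F a hF]
        rw [show (1:ℝ) = Real.sqrt 1 from (Real.sqrt_one).symm]
        apply Real.sqrt_le_sqrt
        nlinarith [hq0 (fun k => ((v j0 k : ℝ)))]
    exact le_trans hnormval (hbound j0)
  have hS1ge1 : ∀ r ∈ S1, (1:ℝ) ≤ r := fun r hr => hge1 F1 (Or.inl hF1.2.2) r hr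
  have hinf1 : 1 ≤ sInf S1 := le_csInf hS1ne hS1ge1
  -- comparison of infima
  have hcomp : sInf S2 ≤ c * sInf S1 := by
    rw [← div_le_iff₀' hcpos]
    apply le_csInf hS1ne
    intro r hr
    rw [div_le_iff₀' hcpos]
    apply csInf_le hbdd2
    obtain ⟨hr0, v, hli, hbound⟩ := hr
    refine ⟨by positivity, v, ?_, fun j => ?_⟩
    · exact (hLI F2 hinj2 v).mpr ((hLI F1 hinj1 v).mp hli)
    · calc euclNorm (latticeVec F2 (v j)) ≤ c * euclNorm (latticeVec F1 (v j)) := hkey (v j)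
      _ ≤ c * r := by
          apply mul_le_mul_of_nonneg_left (hbound j) hcpos.le
  calc succMin F2 i = sInf S2 := rfl
  _ ≤ c * sInf S1 := hcomp
  _ < 1 * sInf S1 := by
      apply mul_lt_mul_of_pos_right hclt (lt_of_lt_of_le one_pos hinf1)
  _ = succMin F1 i := by rw [one_mul]; rfl
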